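/- Let H be a Hermitian d×d matrix and L₁,…,L_ℓ be d×d complex matrices that are all diagonal in an orthonormal basis (e_i). Define the Lindbladian L(X) = −i[H,X] + Σ_k (L_k X L_k* − ½{L_k* L_k, X}). Then for all i, j, the matrix E_{i,j} = e_i e_j* is an eigenvector of L with eigenvalue τ_{i,j} = −½ Σ_k |(L_k)_{ii} − (L_k)_{jj}|² − i( H_{ii} − H_{jj} + Σ_k Im( conj((L_k)_{ii}) (L_k)_{jj} ) ). -/

import Mathlib

open Matrix

private lemma diag_mul_std {d : ℕ} (A : Matrix (Fin d) (Fin d) ℂ) (hA : A.IsDiag)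
    (i j : Fin d) :
    A * single i j (1:ℂ) = A i i • single i j 1 := by
  ext a b
  simp only [mul_apply, single, Matrix.smul_apply, smul_eq_mul, of_apply]
  by_cases hb : j = b
  · subst hb
    simp only [and_true]
    rw [Finset.sum_eq_single i]
    · by_cases ha : i = a
      · subst ha; simp
      · simp [ha, hA (fun h => ha h.symm)]
    · intro c _ hc; simp [Ne.symm hc]
    · simp
  · simp [hb]

private lemma std_mul_diag {d : ℕ} (A : Matrix (Fin d) (Fin d) ℂ) (hA : A.IsDiag)
    (i j : Fin d) :
    single i j (1:ℂ) * A = A j j • single i j 1 := by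
  ext a b
  simp only [mul_apply, single, Matrix.smul_apply, smul_eq_mul, of_apply]
  by_cases ha : i = a
  · subst ha
    simp only [true_and]
    rw [Finset.sum_eq_single j]
    · by_cases hb : j = b
      · subst hb; simp [mul_comm]
      · simp [hb, hA (fun h => hb h)]
    · intro c _ hc
      simp only [ite_mul, one_mul, zero_mul, ite_eq_right_iff]
      exact fun h => absurd h.symm hc
    · simp
  · simp [ha]

private lemma scalar_key (a b : ℂ) :
    a * (starRingEnd ℂ) b - (1/2 : ℂ) * ((starRingEnd ℂ) a * a + (starRingEnd ℂ) b * b)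
      = -(1/2 : ℂ) * (Complex.normSq (a - b) : ℂ)
        - Complex.I * (((starRingEnd ℂ) a * b).im : ℂ) := by
  simp [Complex.ext_iff, Complex.normSq_apply, Complex.mul_im, Complex.mul_re,
    Complex.conj_re, Complex.conj_im]
  constructor <;> ring

/-- For a Lindbladian whose Hamiltonian and Kraus operators are all diagonal in the
standard basis, each matrix unit `E_{i,j}` is an eigenvector, with explicit eigenvalue. -/
theorem lindblad_diagonal_eigenvectors
    {d ℓ : ℕ} (H : Matrix (Fin d) (Fin d) ℂ) (Lm : Fin ℓ → Matrix (Fin d) (Fin d) ℂ)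
    (hH : H.IsHermitian) (hHdiag : H.IsDiag) (hLdiag : ∀ k, (Lm k).IsDiag)
    (Lind : Matrix (Fin d) (Fin d) ℂ → Matrix (Fin d) (Fin d) ℂ)
    (hLind : ∀ X, Lind X = -Complex.I • (H * X - X * H) +
      ∑ k, (Lm k * X * (Lm k)ᴴ - (1/2 : ℂ) • ((Lm k)ᴴ * Lm k * X + X * ((Lm k)ᴴ * Lm k))))
    (i j : Fin d) :
    Lind (Matrix.single i j 1) =
      (-(1/2 : ℂ) * ∑ k, (Complex.normSq (Lm k i i - Lm k j j) : ℂ)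
        - Complex.I * (H i i - H j j
            + ∑ k, (((starRingEnd ℂ) (Lm k i i) * Lm k j j).im : ℂ)))
        • Matrix.single i j 1 := by
  have hLH : ∀ k, ((Lm k)ᴴ * Lm k).IsDiag := by
    intro k a b hab
    simp only [mul_apply, conjTranspose_apply]
    apply Finset.sum_eq_zero
    intro c _
    by_cases hca : c = a
    · subst hca; simp [hLdiag k hab]
    · simp [hLdiag k hca]
  have hLHd : ∀ k a, ((Lm k)ᴴ * Lm k) a a = (starRingEnd ℂ) (Lm k a a) * Lm k a a := by
    intro k a
    simp only [mul_apply, conjTranspose_apply]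
    rw [Finset.sum_eq_single a (fun c _ hc => by simp [hLdiag k hc]) (by simp)]
    rfl
  rw [hLind]
  set E := single i j (1:ℂ) with hE
  have h1 : ∀ k, Lm k * E * (Lm k)ᴴ
      - (1/2 : ℂ) • ((Lm k)ᴴ * Lm k * E + E * ((Lm k)ᴴ * Lm k))
      = (Lm k i i * (starRingEnd ℂ) (Lm k j j)
          - (1/2 : ℂ) * ((starRingEnd ℂ) (Lm k i i) * Lm k i i
            + (starRingEnd ℂ) (Lm k j j) * Lm k j j)) • E := by
    intro k
    rw [diag_mul_std (Lm k) (hLdiag k), smul_mul_assoc,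
      std_mul_diag ((Lm k)ᴴ) ((hLdiag k).conjTranspose),
      diag_mul_std _ (hLH k), std_mul_diag _ (hLH k),
      conjTranspose_apply, hLHd, hLHd]
    simp only [smul_smul, ← add_smul, ← sub_smul, Complex.star_def]
    rfl
  have h2 : H * E - E * H = (H i i - H j j) • E := by
    rw [diag_mul_std H hHdiag, std_mul_diag H hHdiag, sub_smul]
  rw [h2, Finset.sum_congr rfl (fun k _ => h1 k), ← Finset.sum_smul, smul_smul, ← add_smul]
  congr 1
  rw [Finset.sum_congr rfl (fun k _ => scalar_key (Lm k i i) (Lm k j j)),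
    Finset.sum_sub_distrib, ← Finset.mul_sum, ← Finset.mul_sum]
  ring
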